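/- Let A be a complex abelian variety and Z ⊆ A a positive-dimensional closed subvariety that is fibred by a nontrivial abelian subvariety B ⊆ A (i.e., Z + B = Z). Then there exists a nonzero holomorphic 1-form ω on A (equivalently, a nonzero translation-invariant 1-form) whose restriction to the smooth locus of Z has no zeros. -/

import Mathlib

/- STATEMENT 5: Universal-cover model of an abelian variety A = V/Λ: holomorphic 1-forms
on A are (continuous) linear functionals on V, the subvariety Z is modeled by its
(Λ-periodic) preimage Z ⊆ V, and the abelian subvariety B by the subspace W = Lie B.
Z fibred by B means Z is invariant under translation by W. A zero of ω|_Z at z means ω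
vanishes on the tangent cone of Z at z. Conclusion: there is a nonzero (invariant)
1-form ω whose restriction to Z has no zeros. -/
theorem stmt5 (V : Type*) [NormedAddCommGroup V] [NormedSpace ℂ V] [FiniteDimensional ℂ V]
    (Z : Set V) (hZne : Z.Nonempty)
    (W : Submodule ℂ V) (hW : W ≠ ⊥)
    (hfib : ∀ z ∈ Z, ∀ w ∈ W, z + w ∈ Z) :  -- Z + B = Z
    ∃ ω : V →L[ℂ] ℂ, ω ≠ 0 ∧
      ∀ z ∈ Z, ¬ (∀ u ∈ tangentConeAt ℂ Z z, ω u = 0) := by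
  obtain ⟨w, hwW, hw0⟩ := Submodule.exists_mem_ne_zero_of_ne_bot hW
  obtain ⟨ω, hω1, hωw⟩ := exists_dual_vector ℂ w (norm_ne_zero_iff.mpr hw0)
  refine ⟨ω, ?_, ?_⟩
  · intro h
    apply hw0
    have h0 : (‖w‖ : ℂ) = 0 := by simpa [h] using hωw.symm
    exact norm_eq_zero.mp (by exact_mod_cast h0)
  · intro z hz hall
    have hmem : w ∈ tangentConeAt ℂ Z z := by
      refine mem_tangentConeAt_of_seq (Filter.atTop : Filter ℕ) (fun n => (n : ℂ)) (fun n => ((n : ℂ))⁻¹ • w) ?_ ?_ ?_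
      · simpa using (tendsto_inv_atTop_nhds_zero_nat (𝕜 := ℂ)).smul_const w
      · filter_upwards with n
        exact hfib z hz _ (W.smul_mem _ hwW)
      · have : ∀ᶠ n : ℕ in Filter.atTop, (n : ℂ) • ((n : ℂ))⁻¹ • w = w := by
          filter_upwards [Filter.eventually_gt_atTop 0] with n hn
          rw [smul_smul, mul_inv_cancel₀ (by exact_mod_cast hn.ne'), one_smul]
        exact (tendsto_const_nhds : Filter.Tendsto (fun _ : ℕ => w) _ _).congr' (this.mono fun n h => h.symm)
    have := hall w hmem
    rw [this] at hωw
    have h0 : (‖w‖ : ℂ) = 0 := hωw.symm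
    exact hw0 (norm_eq_zero.mp (by exact_mod_cast h0))
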